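/- Let B be a trail-reachable bidirected graph rooted at r, and let x be a trail-solid vertex with x ≠ r. Then there exists a sign \alpha in {+,-} such that B contains no path from r ending at x with sign \alpha. -/

import Mathlib

/-- A bidirected graph: a loopless multigraph together with a signing of each
half-edge (edge-endpoint incidence) by a sign (`true` = `+`, `false` = `-`). -/
structure BidirGraph (V : Type) (E : Type) where
  ends : E → V × V
  sign : E → V → Bool
  loopless : ∀ e : E, (ends e).1 ≠ (ends e).2

namespace BidirGraph

variable {V E : Type}

/-- The head of an oriented edge `(e, b)`: `b = true` orients `e` from its first
endpoint to its second endpoint. -/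
def ohead (B : BidirGraph V E) (oe : E × Bool) : V :=
  if oe.2 then (B.ends oe.1).2 else (B.ends oe.1).1

/-- The tail of an oriented edge. -/
def otail (B : BidirGraph V E) (oe : E × Bool) : V :=
  if oe.2 then (B.ends oe.1).1 else (B.ends oe.1).2

/-- `e` is incident with `v`. -/
def Incident (B : BidirGraph V E) (e : E) (v : V) : Prop :=
  (B.ends e).1 = v ∨ (B.ends e).2 = v

/-- `L` is a trail starting at `v`: a sequence of oriented edges, with no repeated
underlying edge, consecutive edges sharing a vertex at which they have opposite signs. -/
def IsTrailFrom (B : BidirGraph V E) (v : V) (L : List (E × Bool)) : Prop :=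
  (L.map Prod.fst).Nodup ∧
  (∀ oe ∈ L.head?, B.otail oe = v) ∧
  L.Chain' (fun a b => B.ohead a = B.otail b ∧ B.sign a.1 (B.ohead a) ≠ B.sign b.1 (B.ohead a))

/-- The final vertex of a trail starting at `v`. -/
def trailEnd (B : BidirGraph V E) (v : V) (L : List (E × Bool)) : V :=
  match L.getLast? with
  | none => v
  | some oe => B.ohead oe

/-- The internal vertices of a trail: the heads of all edges except the last one. -/
def Internal (B : BidirGraph V E) (L : List (E × Bool)) : List V :=
  (L.map B.ohead).dropLast

/-- An `r`-trail: a trail starting at `r` with no internal vertex equal to `r`. -/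
def IsRTrail (B : BidirGraph V E) (r : V) (L : List (E × Bool)) : Prop :=
  B.IsTrailFrom r L ∧ ∀ v ∈ B.Internal L, v ≠ r

/-- The trail `L` ends at vertex `w` with sign `α`. -/
def EndsAtSigned (B : BidirGraph V E) (L : List (E × Bool)) (w : V) (α : Bool) : Prop :=
  ∃ oe, L.getLast? = some oe ∧ B.ohead oe = w ∧ B.sign oe.1 w = α

/-- A path: a trail with no repeated vertex. -/
def IsPathFrom (B : BidirGraph V E) (v : V) (L : List (E × Bool)) : Prop :=
  B.IsTrailFrom v L ∧ (v :: L.map B.ohead).Nodup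

/-- An almost path: a trail that is trivial or becomes a path after removing its last edge. -/
def IsAlmostPathFrom (B : BidirGraph V E) (v : V) (L : List (E × Bool)) : Prop :=
  B.IsTrailFrom v L ∧ (v :: B.Internal L).Nodup

/-- An edge is trail-undirectable if there are `r`-trails ending in both of its orientations. -/
def TrailUndirectable (B : BidirGraph V E) (r : V) (e : E) : Prop :=
  (∃ L, B.IsRTrail r L ∧ L.getLast? = some (e, true)) ∧
  (∃ L, B.IsRTrail r L ∧ L.getLast? = some (e, false))

/-- `(e, b)` is the natural orientation of the trail-directable edge `e`: `r`-trails end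
in the orientation `(e, b)` but not in the opposite orientation. -/
def NatOrient (B : BidirGraph V E) (r : V) (e : E) (b : Bool) : Prop :=
  (∃ L, B.IsRTrail r L ∧ L.getLast? = some (e, b)) ∧
  ¬ ∃ L, B.IsRTrail r L ∧ L.getLast? = some (e, !b)

/-- An edge is trail-directable if exactly one of its orientations is the final oriented
edge of some `r`-trail. -/
def TrailDirectable (B : BidirGraph V E) (r : V) (e : E) : Prop :=
  ∃ b, B.NatOrient r e b

/-- `B` is trail-reachable: every edge is the final edge of some `r`-trail. -/
def TrailReachable (B : BidirGraph V E) (r : V) : Prop :=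
  ∀ e : E, ∃ L b, B.IsRTrail r L ∧ L.getLast? = some (e, b)

/-- Adjacency of trail-undirectable edges: both undirectable and sharing an endpoint. -/
def UStep (B : BidirGraph V E) (r : V) (a b : E) : Prop :=
  B.TrailUndirectable r a ∧ B.TrailUndirectable r b ∧ ∃ v, B.Incident a v ∧ B.Incident b v

/-- `C` is (the edge set of) a nontrivial trail-undirectable component of `B`: the set of
trail-undirectable edges connected to some trail-undirectable edge `e` inside the subgraph
induced by the trail-undirectable edges. -/
def IsUComp (B : BidirGraph V E) (r : V) (C : Set E) : Prop :=
  ∃ e, B.TrailUndirectable r e ∧ C = {f | Relation.ReflTransGen (B.UStep r) e f}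

/-- `v` is a vertex of the edge set `C` (i.e. an endpoint of one of its edges). -/
def VC (B : BidirGraph V E) (C : Set E) (v : V) : Prop :=
  ∃ e ∈ C, B.Incident e v

/-- `B` is edge-clean: the root lies in no nontrivial trail-undirectable component. -/
def EdgeClean (B : BidirGraph V E) (r : V) : Prop :=
  ¬ ∃ C : Set E, B.IsUComp r C ∧ B.VC C r

/-- `B` is clean: there is no nontrivial almost path starting and ending at `r`. -/
def Clean (B : BidirGraph V E) (r : V) : Prop :=
  ¬ ∃ L, L ≠ ([] : List (E × Bool)) ∧ B.IsAlmostPathFrom r L ∧ B.trailEnd r L = r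

/-- A vertex is trail-solid if it is the root, or the head of the natural orientation of a
trail-directable edge, or incident with no trail-undirectable edge. -/
def TrailSolid (B : BidirGraph V E) (r v : V) : Prop :=
  v = r ∨ (∃ e b, B.NatOrient r e b ∧ B.ohead (e, b) = v) ∨
    (∀ e : E, B.Incident e v → ¬ B.TrailUndirectable r e)

/-- Two trails are edge-disjoint if no underlying edge occurs in both. -/
def EdgeDisj (L₁ L₂ : List (E × Bool)) : Prop :=
  ∀ (e : E) (b₁ b₂ : Bool), (e, b₁) ∈ L₁ → (e, b₂) ∈ L₂ → False

/-- Two paths are internally vertex-disjoint if they share no internal vertex. -/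
def IntDisj (B : BidirGraph V E) (L₁ L₂ : List (E × Bool)) : Prop :=
  ∀ w : V, w ∈ B.Internal L₁ → w ∈ B.Internal L₂ → False

end BidirGraph

namespace BidirGraph

variable {V E : Type}

lemma otail_flip (B : BidirGraph V E) (oe : E × Bool) :
    B.otail (oe.1, !oe.2) = B.ohead oe := by
  obtain ⟨e, b⟩ := oe; cases b <;> simp [otail, ohead]

lemma incident_ohead (B : BidirGraph V E) (oe : E × Bool) :
    B.Incident oe.1 (B.ohead oe) := by
  obtain ⟨e, b⟩ := oe; cases b <;> simp [ohead, Incident]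

lemma incident_iff' (B : BidirGraph V E) (oe : E × Bool) (v : V) :
    B.Incident oe.1 v ↔ B.ohead oe = v ∨ B.otail oe = v := by
  obtain ⟨e, b⟩ := oe; cases b <;> first | (simp [Incident, ohead, otail]; tauto) | simp [Incident, ohead, otail]

lemma path_rtrail (B : BidirGraph V E) {r : V} {L : List (E × Bool)}
    (h : B.IsPathFrom r L) : B.IsRTrail r L := by
  refine ⟨h.1, fun v hv hvr => ?_⟩
  have h1 : r ∉ L.map B.ohead := (List.nodup_cons.mp h.2).1
  exact h1 (hvr ▸ List.dropLast_subset _ hv)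

/-- The tail of any edge of a trail is the start vertex or an internal vertex. -/
lemma tails_mem (B : BidirGraph V E) :
    ∀ (L : List (E × Bool)) (v : V),
      (∀ oe ∈ L.head?, B.otail oe = v) →
      L.Chain' (fun a b => B.ohead a = B.otail b ∧
        B.sign a.1 (B.ohead a) ≠ B.sign b.1 (B.ohead a)) →
      ∀ g ∈ L, B.otail g = v ∨ B.otail g ∈ (L.map B.ohead).dropLast
  | [], v, _, _, g, hg => absurd hg List.not_mem_nil
  | a :: L, v, hhead, hchain, g, hg => by
    rcases List.mem_cons.mp hg with rfl | hg'
    · exact Or.inl (hhead g rfl)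
    · match L, hg' with
      | b :: L', hg' =>
        have hrel := List.isChain_cons_cons.mp hchain
        have IH := tails_mem B (b :: L') (B.ohead a)
          (fun oe hoe => by
            simp only [List.head?_cons, Option.mem_def, Option.some.injEq] at hoe
            subst hoe; exact hrel.1.1.symm)
          hrel.2 g hg'
        right
        have hd : ((a :: b :: L').map B.ohead).dropLast
            = B.ohead a :: ((b :: L').map B.ohead).dropLast := rfl
        rw [hd]
        rcases IH with h | h
        · rw [h]; exact List.mem_cons_self
        · exact List.mem_cons_of_mem _ h

/-- In a path from `r` ending at `x ≠ r`, any edge incident with `x` is the last edge. -/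
lemma incident_last (B : BidirGraph V E) {r x : V} {L : List (E × Bool)}
    (hP : B.IsPathFrom r L) {f : E × Bool} (hlast : L.getLast? = some f)
    (hx : B.ohead f = x) (hxr : x ≠ r)
    {g : E × Bool} (hg : g ∈ L) (hinc : B.Incident g.1 x) : g.1 = f.1 := by
  obtain ⟨L', rfl⟩ : ∃ L', L = L' ++ [f] := List.getLast?_eq_some_iff.mp hlast
  rcases List.mem_append.mp hg with hg' | hg''
  · exfalso
    have hnodupV : ((L' ++ [f]).map B.ohead).Nodup := (List.nodup_cons.mp hP.2).2
    have hxnot : x ∉ L'.map B.ohead := by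
      have h2 : (L'.map B.ohead ++ [x]).Nodup := by
        simpa [hx] using hnodupV
      rw [List.nodup_append] at h2
      intro hmem
      exact h2.2.2 x hmem x (by simp) rfl
    rcases (B.incident_iff' g x).mp hinc with hh | ht
    · exact hxnot (hh ▸ List.mem_map_of_mem (f := B.ohead) hg')
    · rcases B.tails_mem (L' ++ [f]) r hP.1.2.1 hP.1.2.2 g hg with h | h
      · exact hxr (ht ▸ h)
      · rw [List.map_append, List.map_singleton, List.dropLast_concat] at h
        exact hxnot (ht ▸ h)
  · simp only [List.mem_singleton] at hg''
    rw [hg'']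

/-- Extending a path ending at `x` by a fresh edge leaving `x` with opposite sign
gives an `r`-trail. -/
lemma extend_path (B : BidirGraph V E) {r x : V} {L : List (E × Bool)}
    (hP : B.IsPathFrom r L) {f : E × Bool} (hlast : L.getLast? = some f)
    (hx : B.ohead f = x)
    {g : E × Bool} (htail : B.otail g = x) (hnew : g.1 ∉ L.map Prod.fst)
    (hsign : B.sign f.1 x ≠ B.sign g.1 x) :
    B.IsRTrail r (L ++ [g]) ∧ (L ++ [g]).getLast? = some g := by
  obtain ⟨hnodup, hhead, hchain⟩ := hP.1
  have hLne : L ≠ [] := by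
    intro h; rw [h] at hlast; simp at hlast
  refine ⟨⟨⟨?_, ?_, ?_⟩, ?_⟩, by simp⟩
  · rw [List.map_append, List.map_singleton, List.nodup_append]
    exact ⟨hnodup, List.nodup_singleton _, by
      intro a ha b hb hab
      simp only [List.mem_singleton] at hb
      subst hb hab; exact hnew ha⟩
  · intro oe hoe
    apply hhead
    rwa [List.head?_append_of_ne_nil _ hLne] at hoe
  · show List.IsChain _ (L ++ [g])
    rw [List.isChain_append]
    refine ⟨hchain, List.isChain_singleton _, fun a ha b hb => ?_⟩
    rw [hlast] at ha
    simp only [Option.mem_def, Option.some.injEq, List.head?_cons] at ha hb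
    subst ha; subst hb
    exact ⟨by rw [hx, htail], by rw [hx]; exact hsign⟩
  · intro v hv hvr
    have h1 : r ∉ L.map B.ohead := (List.nodup_cons.mp hP.2).1
    unfold Internal at hv
    rw [List.map_append, List.map_singleton, List.dropLast_concat] at hv
    exact h1 (hvr ▸ hv)

lemma undirectable_of_both (B : BidirGraph V E) {r : V} {e : E} {b : Bool}
    {L₁ L₂ : List (E × Bool)}
    (h₁ : B.IsRTrail r L₁) (hl₁ : L₁.getLast? = some (e, b))
    (h₂ : B.IsRTrail r L₂) (hl₂ : L₂.getLast? = some (e, !b)) :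
    B.TrailUndirectable r e := by
  cases b
  · exact ⟨⟨L₂, h₂, by simpa using hl₂⟩, ⟨L₁, h₁, hl₁⟩⟩
  · exact ⟨⟨L₁, h₁, hl₁⟩, ⟨L₂, h₂, by simpa using hl₂⟩⟩

end BidirGraph

open BidirGraph in
/-- In a trail-reachable rooted bidirected graph, every trail-solid vertex
`x ≠ r` admits a sign `α` such that no `r`-path ends at `x` with sign `α`. -/
theorem stmt7 {V E : Type} (B : BidirGraph V E) (r : V)
    (hreach : B.TrailReachable r)
    (x : V) (hsolid : B.TrailSolid r x) (hxr : x ≠ r) :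
    ∃ α : Bool, ¬ ∃ L, B.IsPathFrom r L ∧ B.EndsAtSigned L x α := by
  rcases hsolid with rfl | ⟨e, b, hnat, hhead⟩ | hno
  · exact absurd rfl hxr
  · -- `x` is the head of the natural orientation `(e, b)`.
    refine ⟨!(B.sign e x), ?_⟩
    rintro ⟨P, hP, fc, hlast, hhx, hsg⟩
    by_cases hfe : fc.1 = e
    · by_cases hcb : fc.2 = b
      · rw [hfe] at hsg
        simp at hsg
      · have hcb' : fc.2 = !b := by revert hcb; cases fc.2 <;> cases b <;> simp
        refine hnat.2 ⟨P, B.path_rtrail hP, ?_⟩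
        rw [hlast]
        congr 1
        exact Prod.ext hfe hcb'
    · have hincx : B.Incident e x := hhead ▸ B.incident_ohead (e, b)
      have hne : e ∉ P.map Prod.fst := by
        intro hmem
        obtain ⟨oe, hoe, h1⟩ := List.mem_map.mp hmem
        have := B.incident_last hP hlast hhx hxr hoe (h1 ▸ hincx)
        exact hfe (by rw [← this, h1])
      have htail : B.otail (e, !b) = x := by
        have := B.otail_flip (e, b)
        simpa [hhead] using this
      have hsgn : B.sign fc.1 x ≠ B.sign e x := by
        rw [hsg]; simp
      obtain ⟨htr, hlast'⟩ := B.extend_path hP hlast hhx htail hne hsgn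
      exact hnat.2 ⟨P ++ [(e, !b)], htr, hlast'⟩
  · -- `x` is incident with no trail-undirectable edge.
    by_contra hcon
    push_neg at hcon
    obtain ⟨P, hP, fc, hlastP, hhP, hsP⟩ := hcon true
    obtain ⟨Q, hQ, gd, hlastQ, hhQ, hsQ⟩ := hcon false
    have hincg : B.Incident gd.1 x := hhQ ▸ B.incident_ohead gd
    by_cases hfg : fc.1 = gd.1
    · by_cases hcd : fc.2 = gd.2
      · have : fc = gd := Prod.ext hfg hcd
        rw [this, hsQ] at hsP
        exact Bool.noConfusion hsP
      · have hcd' : fc.2 = !gd.2 := by revert hcd; cases fc.2 <;> cases gd.2 <;> simp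
        have h1 : P.getLast? = some (gd.1, !gd.2) := by
          rw [hlastP]; congr 1; exact Prod.ext hfg hcd'
        have h2 : Q.getLast? = some (gd.1, gd.2) := by rw [hlastQ]
        exact hno gd.1 hincg
          (B.undirectable_of_both (B.path_rtrail hQ) h2 (B.path_rtrail hP) h1)
    · have hne : gd.1 ∉ P.map Prod.fst := by
        intro hmem
        obtain ⟨oe, hoe, h1⟩ := List.mem_map.mp hmem
        have := B.incident_last hP hlastP hhP hxr hoe (h1 ▸ hincg)
        exact hfg (by rw [← this, h1])
      have htail : B.otail (gd.1, !gd.2) = x := by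
        have := B.otail_flip gd
        simpa [hhQ] using this
      have hsgn : B.sign fc.1 x ≠ B.sign gd.1 x := by
        rw [hsP, hsQ]; simp
      obtain ⟨htr, hlast'⟩ := B.extend_path hP hlastP hhP htail hne hsgn
      have h2 : Q.getLast? = some (gd.1, gd.2) := by rw [hlastQ]
      exact hno gd.1 hincg
        (B.undirectable_of_both (B.path_rtrail hQ) h2 htr hlast')
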